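/- For every positive integer s, the first-order sentence KEIN_s is not expressible by any first-order sentence on rooted, locally finite trees whose alternating quantifier depth is at most s-1. -/

import Mathlib

/-! ## Rooted trees -/

/-- A rooted tree structure: a vertex type, a root, and a parent map
(`parent v = none` is intended to hold exactly when `v` is the root). -/
structure RTree where
  V : Type
  root : V
  parent : V → Option V

namespace RTree

/-- Iterate the parent map `n` times. -/
def parentIter (T : RTree) : ℕ → T.V → Option T.V
  | 0, v => some v
  | n + 1, v => (T.parent v).bind (T.parentIter n)

/-- `u` is a descendant of `v` (possibly `u = v`). -/
def IsDesc (T : RTree) (v u : T.V) : Prop :=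
  ∃ n, T.parentIter n u = some v

/-- The structure is a genuine rooted, locally finite tree:
exactly the root has no parent, every vertex reaches the root by iterating
the parent map (connectivity and acyclicity), and every vertex has finitely
many children (local finiteness). -/
def IsTree (T : RTree) : Prop :=
  (∀ v, T.parent v = none ↔ v = T.root) ∧
  (∀ v, ∃ n, T.parentIter n v = some T.root) ∧
  (∀ v, {u | T.parent u = some v}.Finite)

open Classical in
/-- The subtree `T(v)` consisting of `v` and all its descendants, rooted at `v`. -/
noncomputable def subtree (T : RTree) (v : T.V) : RTree where
  V := {u : T.V // T.IsDesc v u}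
  root := ⟨v, 0, rfl⟩
  parent u :=
    if u.1 = v then none
    else (T.parent u.1).bind fun w =>
      if h : T.IsDesc v w then some ⟨w, h⟩ else none

end RTree

/-- An isomorphism of rooted trees: a bijection of vertices mapping root to
root and commuting with the parent maps. -/
structure TreeIso (S T : RTree) where
  toEquiv : S.V ≃ T.V
  map_root : toEquiv S.root = T.root
  map_parent : ∀ v, (S.parent v).map toEquiv = T.parent (toEquiv v)

/-! ## First-order logic of rooted trees -/

/-- Terms: variables (de Bruijn indices) and the constant `R` for the root. -/
inductive FOTerm where
  | var : ℕ → FOTerm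
  | root : FOTerm
deriving DecidableEq

/-- First-order formulas in the language of rooted trees: equality `x = y`,
the parent relation `parentOf t t'` (meaning `π(t') = t`, i.e. `t` is the
parent of `t'`), Boolean connectives, and quantifiers (de Bruijn style). -/
inductive FOFormula where
  | eq : FOTerm → FOTerm → FOFormula
  | parentOf : FOTerm → FOTerm → FOFormula
  | not : FOFormula → FOFormula
  | and : FOFormula → FOFormula → FOFormula
  | or : FOFormula → FOFormula → FOFormula
  | imp : FOFormula → FOFormula → FOFormula
  | all : FOFormula → FOFormula
  | ex : FOFormula → FOFormula
deriving DecidableEq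

namespace FOTerm

def eval (T : RTree) (env : ℕ → T.V) : FOTerm → T.V
  | var n => env n
  | root => T.root

def freeBound : FOTerm → ℕ
  | var n => n + 1
  | root => 0

end FOTerm

/-- Kinds of quantifiers, used to count alternations. -/
inductive QKind where
  | ex | all
deriving DecidableEq

/-- The dual of a quantifier kind. -/
def QKind.dual : QKind → QKind
  | .ex => .all
  | .all => .ex

namespace FOFormula

/-- Satisfaction of a formula in a rooted tree under an environment. -/
def Sat (T : RTree) : FOFormula → (ℕ → T.V) → Prop
  | eq t₁ t₂, env => t₁.eval T env = t₂.eval T env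
  | parentOf t₁ t₂, env => T.parent (t₂.eval T env) = some (t₁.eval T env)
  | not φ, env => ¬ φ.Sat T env
  | and φ ψ, env => φ.Sat T env ∧ ψ.Sat T env
  | or φ ψ, env => φ.Sat T env ∨ ψ.Sat T env
  | imp φ ψ, env => φ.Sat T env → ψ.Sat T env
  | all φ, env => ∀ w : T.V, φ.Sat T (fun n => match n with | 0 => w | Nat.succ k => env k)
  | ex φ, env => ∃ w : T.V, φ.Sat T (fun n => match n with | 0 => w | Nat.succ k => env k)

/-- Quantifier depth: the maximum number of nested quantifiers. -/
def qd : FOFormula → ℕ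
  | eq _ _ => 0
  | parentOf _ _ => 0
  | not φ => φ.qd
  | and φ ψ => max φ.qd ψ.qd
  | or φ ψ => max φ.qd ψ.qd
  | imp φ ψ => max φ.qd ψ.qd
  | all φ => φ.qd + 1
  | ex φ => φ.qd + 1

/-- Auxiliary alternation count: `aqdAux φ pol q` is the maximum number of
alternations between (effectively) existential and universal quantifiers along
a nested quantifier sequence of `φ`, given the current polarity `pol`
(`true` = positive; negations and antecedents of implications flip it, so that
e.g. a `∀` under a negation counts as an `∃`) and the effective kind `q` of
the innermost enclosing quantifier (if any). -/
def aqdAux : FOFormula → Bool → Option QKind → ℕ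
  | eq _ _, _, _ => 0
  | parentOf _ _, _, _ => 0
  | not φ, pol, q => φ.aqdAux (!pol) q
  | and φ ψ, pol, q => max (φ.aqdAux pol q) (ψ.aqdAux pol q)
  | or φ ψ, pol, q => max (φ.aqdAux pol q) (ψ.aqdAux pol q)
  | imp φ ψ, pol, q => max (φ.aqdAux (!pol) q) (ψ.aqdAux pol q)
  | all φ, pol, q =>
      (if q = some (if pol then QKind.ex else QKind.all) then 1 else 0) +
        φ.aqdAux pol (some (if pol then QKind.all else QKind.ex))
  | ex φ, pol, q =>
      (if q = some (if pol then QKind.all else QKind.ex) then 1 else 0) +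
        φ.aqdAux pol (some (if pol then QKind.ex else QKind.all))

/-- The number of alternations of quantifiers of a formula: the maximum number
of switches between (effectively) existential and universal quantifiers in a
nested quantifier sequence.  Purely existential or purely universal formulas
have `aqd = 0`. -/
def aqd (φ : FOFormula) : ℕ := φ.aqdAux true none

/-- A bound on the free variables of a formula: all free de Bruijn indices
are `< freeBound`. -/
def freeBound : FOFormula → ℕ
  | eq t₁ t₂ => max t₁.freeBound t₂.freeBound
  | parentOf t₁ t₂ => max t₁.freeBound t₂.freeBound
  | not φ => φ.freeBound
  | and φ ψ => max φ.freeBound ψ.freeBound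
  | or φ ψ => max φ.freeBound ψ.freeBound
  | imp φ ψ => max φ.freeBound ψ.freeBound
  | all φ => φ.freeBound - 1
  | ex φ => φ.freeBound - 1

/-- A sentence is a formula with no free variables. -/
def IsSentence (φ : FOFormula) : Prop := φ.freeBound = 0

end FOFormula

/-- A (closed) formula holds in a rooted tree. -/
def Models (T : RTree) (φ : FOFormula) : Prop :=
  φ.Sat T (fun _ => T.root)

/-- The formula `P_i(x)`, with free variable `x` being de Bruijn index `0`:
`P_0(x) = ∀ y ¬(π(y) = x)` and `P_{i+1}(x) = ∀ y (π(y) = x → ¬ P_i(y))`. -/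
def Pform : ℕ → FOFormula
  | 0 => .all (.not (.parentOf (.var 1) (.var 0)))
  | i + 1 => .all (.imp (.parentOf (.var 1) (.var 0)) (.not (Pform i)))

/-- The sentence `KEIN_i = P_i(R)`. -/
def KEIN : ℕ → FOFormula
  | 0 => .all (.not (.parentOf .root (.var 0)))
  | i + 1 => .all (.imp (.parentOf .root (.var 0)) (.not (Pform i)))

/-! ## Ehrenfeucht games -/

/-- The winning condition for Duplicator: for all pairs `(x_i, y_i)`, `(x_j, y_j)`
in the list of selected/designated pairs, (Main 1) `π(x_j) = x_i ↔ π(y_j) = y_i`,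
and (Main 2) `x_i = x_j ↔ y_i = y_j`. -/
def GoodPairs (T₁ T₂ : RTree) (ps : List (T₁.V × T₂.V)) : Prop :=
  ∀ p ∈ ps, ∀ q ∈ ps,
    (T₁.parent p.1 = some q.1 ↔ T₂.parent p.2 = some q.2) ∧
    (p.1 = q.1 ↔ p.2 = q.2)

/-- Duplicator wins the scheduled Ehrenfeucht game on `T₁, T₂` in which Spoiler
must play his moves in consecutive batches, the batch sizes given by the list
`sched`, switching trees after each batch; `side = true` means Spoiler currently
plays on `T₁` (Duplicator answering on `T₂`), `side = false` means Spoiler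
currently plays on `T₂`.  The list `ps` records the pairs selected so far
(including designated pairs and the pair of roots); Duplicator wins when the
final configuration satisfies `GoodPairs`. -/
def DupWinsSched (T₁ T₂ : RTree) : List ℕ → Bool → List (T₁.V × T₂.V) → Prop
  | [], _, ps => GoodPairs T₁ T₂ ps
  | 0 :: rest, side, ps => DupWinsSched T₁ T₂ rest (!side) ps
  | (n + 1) :: rest, side, ps =>
      if side then
        ∀ x : T₁.V, ∃ y : T₂.V, DupWinsSched T₁ T₂ (n :: rest) side ((x, y) :: ps)
      else
        ∀ y : T₂.V, ∃ x : T₁.V, DupWinsSched T₁ T₂ (n :: rest) side ((x, y) :: ps)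
termination_by sched _ _ => (sched.length, sched.sum)
decreasing_by
  all_goals
    first
      | exact Prod.Lex.left _ _ (Nat.lt_succ_self _)
      | exact Prod.Lex.right _ (by simp [List.sum_cons])

/-- The cost (in switches) for Spoiler of playing on side `side` when his
previous move (if any) was on side `last`. -/
def switchCost (last : Option Bool) (side : Bool) : ℕ :=
  match last with
  | none => 0
  | some b => if b = side then 0 else 1

/-- Duplicator wins the Ehrenfeucht game `EHR` with `rounds` remaining rounds,
`sw` remaining switches allowed to Spoiler, `last` the side on which Spoiler
made his previous move (if any), and `ps` the pairs selected so far.  In each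
round Spoiler picks a side (paying a switch if he changes trees, which he may
do only if he has switches left) and a vertex in that tree, and Duplicator
answers in the other tree. -/
def DupWinsEHRAux (T₁ T₂ : RTree) :
    ℕ → ℕ → Option Bool → List (T₁.V × T₂.V) → Prop
  | 0, _, _, ps => GoodPairs T₁ T₂ ps
  | r + 1, sw, last, ps =>
      ∀ side : Bool, switchCost last side ≤ sw →
        if side then
          ∀ x : T₁.V, ∃ y : T₂.V,
            DupWinsEHRAux T₁ T₂ r (sw - switchCost last side) (some side) ((x, y) :: ps)
        else
          ∀ y : T₂.V, ∃ x : T₁.V,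
            DupWinsEHRAux T₁ T₂ r (sw - switchCost last side) (some side) ((x, y) :: ps)

/-- Duplicator wins the game `EHR[T₁, T₂, s, r]`: `r` rounds, Spoiler may start
on either tree and make at most `s` switches. -/
def DupWinsEHR (T₁ T₂ : RTree) (s r : ℕ) : Prop :=
  DupWinsEHRAux T₁ T₂ r s none [(T₁.root, T₂.root)]

/-! ## The trees `T₁^{(s,k,m)}` and `T₂^{(s,k,m)}` -/

/-- The one-vertex rooted tree. -/
def single : RTree where
  V := PUnit
  root := PUnit.unit
  parent := fun _ => none

/-- Hang the trees `f 0, …, f (n-1)` from a new root: the root of each `f i`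
becomes a child of the new root. -/
def hang (n : ℕ) (f : Fin n → RTree) : RTree where
  V := Unit ⊕ (Σ i : Fin n, (f i).V)
  root := Sum.inl ()
  parent := fun x =>
    match x with
    | Sum.inl _ => none
    | Sum.inr ⟨i, w⟩ =>
      match (f i).parent w with
      | none => some (Sum.inl ())
      | some w' => some (Sum.inr ⟨i, w'⟩)

/-- The pair of trees `(T₁^{(s,k,m)}, T₂^{(s,k,m)})`, indexed by `s` (the
parameter `k` plays no role in the construction).  Conventions for `s = 0`:
`T₁^{(0)}` is a single vertex and `T₂^{(0)}` is a star of `m` childless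
children.  For `s ≥ 1`: in `T₁^{(s+1)}` the root has `m+1` children, from each
of which hangs a copy of `T₂^{(s)}`; in `T₂^{(s+1)}` the root has `m+1`
children, from `m` of which hangs a copy of `T₂^{(s)}` and from the remaining
one hangs a copy of `T₁^{(s)}`. -/
def TreePair (m : ℕ) : ℕ → RTree × RTree
  | 0 => (single, hang m fun _ => single)
  | s + 1 =>
      (hang (m + 1) fun _ => (TreePair m s).2,
       hang (m + 1) fun i => if i.1 = m then (TreePair m s).1 else (TreePair m s).2)

/-- The tree `T₁^{(s,k,m)}`. -/
def Tree1 (s k m : ℕ) : RTree := (TreePair m s).1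

/-- The tree `T₂^{(s,k,m)}`. -/
def Tree2 (s k m : ℕ) : RTree := (TreePair m s).2

/-! ## Auxiliary: cast along tree equality -/

def tcast {S T : RTree} (h : S = T) (v : S.V) : T.V := cast (congrArg RTree.V h) v

lemma tcast_rfl {S : RTree} (v : S.V) : tcast rfl v = v := by simp [tcast]

lemma tcast_parent {S T : RTree} (h : S = T) (v : S.V) :
    T.parent (tcast h v) = (S.parent v).map (tcast h) := by
  subst h; cases hp : S.parent v <;> simp [tcast_rfl, hp]

lemma tcast_inj {S T : RTree} (h : S = T) {v w : S.V} :
    tcast h v = tcast h w ↔ v = w := by subst h; rfl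

lemma tcast_root {S T : RTree} (h : S = T) : tcast h S.root = T.root := by subst h; rfl

lemma tcast_tcast {S T : RTree} (h : S = T) (v : T.V) :
    tcast h (tcast h.symm v) = v := by subst h; rfl

/-! ## A custom Duplicator-win predicate -/

/-- `DWin T₁ T₂ r a b ps` : Duplicator survives `r` more rounds from position
`ps`, where Spoiler may use at most `a` further "blocks" if his next move is on
`T₁` and at most `b` if on `T₂`. -/
def DWin (T₁ T₂ : RTree) : ℕ → ℕ → ℕ → List (T₁.V × T₂.V) → Prop
  | 0, _, _, ps => GoodPairs T₁ T₂ ps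
  | r + 1, a, b, ps =>
      GoodPairs T₁ T₂ ps ∧
      (1 ≤ a → ∀ x : T₁.V, ∃ y : T₂.V, DWin T₁ T₂ r a (a - 1) ((x, y) :: ps)) ∧
      (1 ≤ b → ∀ y : T₂.V, ∃ x : T₁.V, DWin T₁ T₂ r (b - 1) b ((x, y) :: ps))

lemma DWin.good {T₁ T₂ : RTree} {r a b ps} (h : DWin T₁ T₂ r a b ps) :
    GoodPairs T₁ T₂ ps := by
  cases r with
  | zero => exact h
  | succ r => exact h.1

lemma DWin.mono {T₁ T₂ : RTree} :
    ∀ {r' : ℕ} {r a b ps} (_ : DWin T₁ T₂ r a b ps)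
      {a' b' : ℕ} (_ : r' ≤ r) (_ : a' ≤ a) (_ : b' ≤ b),
    DWin T₁ T₂ r' a' b' ps := by
  intro r'
  induction r' with
  | zero => intro r a b ps h a' b' _ _ _; exact h.good
  | succ k ih =>
      intro r a b ps h a' b' hr ha hb
      obtain ⟨rr, rfl⟩ : ∃ rr, r = rr + 1 := ⟨r - 1, by omega⟩
      refine ⟨h.1, ?_, ?_⟩
      · intro ha1 x
        obtain ⟨y, hy⟩ := h.2.1 (le_trans ha1 ha) x
        exact ⟨y, ih hy (by omega) ha (by omega)⟩
      · intro hb1 y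
        obtain ⟨x, hx⟩ := h.2.2 (le_trans hb1 hb) y
        exact ⟨x, ih hx (by omega) (by omega) hb⟩
/-! ## Transfer: winning the game implies elementary equivalence -/

def qbound : Option QKind → ℕ → ℕ → ℕ
  | some .ex, a, _ => a
  | some .all, _, b => b
  | none, a, b => min a b


lemma qbound_sideF {a b c : ℕ} (hab : a ≤ b + 1) (q : Option QKind)
    (h : (if q = some QKind.ex then 1 else 0) + c < qbound q a b) : c < b ∧ 1 ≤ b := by
  rcases q with _ | k
  · simp only [qbound, lt_min_iff] at h; omega
  · cases k <;> simp +arith [qbound] at h <;> omega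

lemma qbound_sideT {a b c : ℕ} (hba : b ≤ a + 1) (q : Option QKind)
    (h : (if q = some QKind.all then 1 else 0) + c < qbound q a b) : c < a ∧ 1 ≤ a := by
  rcases q with _ | k
  · simp only [qbound, lt_min_iff] at h; omega
  · cases k <;> simp +arith [qbound] at h <;> omega

lemma transfer (T₁ T₂ : RTree) :
    ∀ (φ : FOFormula) (r a b : ℕ) (q : Option QKind) (ps : List (T₁.V × T₂.V))
      (env₁ : ℕ → T₁.V) (env₂ : ℕ → T₂.V),
      (∀ i, (env₁ i, env₂ i) ∈ ps) → (T₁.root, T₂.root) ∈ ps →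
      φ.qd ≤ r → a ≤ b + 1 → b ≤ a + 1 → DWin T₁ T₂ r a b ps →
      ∀ pol : Bool, φ.aqdAux pol q < qbound q a b →
      (pol = true → φ.Sat T₁ env₁ → φ.Sat T₂ env₂) ∧
      (pol = false → φ.Sat T₂ env₂ → φ.Sat T₁ env₁) := by
  intro φ
  induction φ with
  | eq t₁ t₂ =>
      intro r a b q ps env₁ env₂ henv hroot _ _ _ hD pol _
      have key : ∀ t : FOTerm, (t.eval T₁ env₁, t.eval T₂ env₂) ∈ ps := by
        intro t; cases t with
        | var n => exact henv n
        | root => exact hroot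
      have g := hD.good _ (key t₁) _ (key t₂)
      constructor <;> intro _ hs <;> simp only [FOFormula.Sat] at hs ⊢
      · exact g.2.mp hs
      · exact g.2.mpr hs
  | parentOf t₁ t₂ =>
      intro r a b q ps env₁ env₂ henv hroot _ _ _ hD pol _
      have key : ∀ t : FOTerm, (t.eval T₁ env₁, t.eval T₂ env₂) ∈ ps := by
        intro t; cases t with
        | var n => exact henv n
        | root => exact hroot
      have g := hD.good _ (key t₂) _ (key t₁)
      constructor <;> intro _ hs <;> simp only [FOFormula.Sat] at hs ⊢
      · exact g.1.mp hs
      · exact g.1.mpr hs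
  | not φ ih =>
      intro r a b q ps env₁ env₂ henv hroot hqd hab hba hD pol hb
      have hb' : φ.aqdAux (!pol) q < qbound q a b := hb
      have := ih r a b q ps env₁ env₂ henv hroot hqd hab hba hD (!pol) hb'
      constructor <;> intro hpol <;> subst hpol <;>
        simp only [FOFormula.Sat] <;> intro h1 h2
      · exact h1 (this.2 rfl h2)
      · exact h1 (this.1 rfl h2)
  | and φ ψ ihφ ihψ =>
      intro r a b q ps env₁ env₂ henv hroot hqd hab hba hD pol hb
      simp only [FOFormula.qd, max_le_iff] at hqd
      simp only [FOFormula.aqdAux, max_lt_iff] at hb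
      have h1 := ihφ r a b q ps env₁ env₂ henv hroot hqd.1 hab hba hD pol hb.1
      have h2 := ihψ r a b q ps env₁ env₂ henv hroot hqd.2 hab hba hD pol hb.2
      constructor <;> intro hpol hs
      · exact ⟨h1.1 hpol hs.1, h2.1 hpol hs.2⟩
      · exact ⟨h1.2 hpol hs.1, h2.2 hpol hs.2⟩
  | or φ ψ ihφ ihψ =>
      intro r a b q ps env₁ env₂ henv hroot hqd hab hba hD pol hb
      simp only [FOFormula.qd, max_le_iff] at hqd
      simp only [FOFormula.aqdAux, max_lt_iff] at hb
      have h1 := ihφ r a b q ps env₁ env₂ henv hroot hqd.1 hab hba hD pol hb.1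
      have h2 := ihψ r a b q ps env₁ env₂ henv hroot hqd.2 hab hba hD pol hb.2
      constructor <;> intro hpol hs
      · exact hs.elim (fun h => Or.inl (h1.1 hpol h)) (fun h => Or.inr (h2.1 hpol h))
      · exact hs.elim (fun h => Or.inl (h1.2 hpol h)) (fun h => Or.inr (h2.2 hpol h))
  | imp φ ψ ihφ ihψ =>
      intro r a b q ps env₁ env₂ henv hroot hqd hab hba hD pol hb
      simp only [FOFormula.qd, max_le_iff] at hqd
      simp only [FOFormula.aqdAux, max_lt_iff] at hb
      have h1 := ihφ r a b q ps env₁ env₂ henv hroot hqd.1 hab hba hD (!pol) hb.1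
      have h2 := ihψ r a b q ps env₁ env₂ henv hroot hqd.2 hab hba hD pol hb.2
      constructor <;> intro hpol hs hφ
      · subst hpol; exact h2.1 rfl (hs (h1.2 rfl hφ))
      · subst hpol; exact h2.2 rfl (hs (h1.1 rfl hφ))
  | all ψ ih =>
      intro r a b q ps env₁ env₂ henv hroot hqd hab hba hD pol hb
      simp only [FOFormula.qd] at hqd
      obtain ⟨rr, rfl⟩ : ∃ rr, r = rr + 1 := ⟨r - 1, by omega⟩
      have hqd' : ψ.qd ≤ rr := by omega
      constructor <;> intro hpol <;> subst hpol
      · -- pol = true : Spoiler moves on T₂ (side false)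
        have hX : ψ.aqdAux true (some QKind.all) < b ∧ 1 ≤ b :=
          qbound_sideF hab q (by simpa [FOFormula.aqdAux] using hb)
        intro hs w
        obtain ⟨x, hDx⟩ := hD.2.2 hX.2 w
        have henv' : ∀ i, ((fun n => match n with | 0 => x | Nat.succ k => env₁ k) i,
            (fun n => match n with | 0 => w | Nat.succ k => env₂ k) i) ∈ ((x, w) :: ps) := by
          intro i; cases i with
          | zero => exact List.mem_cons_self
          | succ k => exact List.mem_cons_of_mem _ (henv k)
        have := ih rr (b - 1) b (some QKind.all) ((x, w) :: ps) _ _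
          henv' (List.mem_cons_of_mem _ hroot) hqd' (by omega) (by omega) hDx true
          (by simpa [qbound] using hX.1)
        exact this.1 rfl (hs x)
      · -- pol = false : Spoiler moves on T₁ (side true)
        have hX : ψ.aqdAux false (some QKind.ex) < a ∧ 1 ≤ a :=
          qbound_sideT hba q (by simpa [FOFormula.aqdAux] using hb)
        intro hs x
        obtain ⟨y, hDy⟩ := hD.2.1 hX.2 x
        have henv' : ∀ i, ((fun n => match n with | 0 => x | Nat.succ k => env₁ k) i,
            (fun n => match n with | 0 => y | Nat.succ k => env₂ k) i) ∈ ((x, y) :: ps) := by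
          intro i; cases i with
          | zero => exact List.mem_cons_self
          | succ k => exact List.mem_cons_of_mem _ (henv k)
        have := ih rr a (a - 1) (some QKind.ex) ((x, y) :: ps) _ _
          henv' (List.mem_cons_of_mem _ hroot) hqd' (by omega) (by omega) hDy false
          (by simpa [qbound] using hX.1)
        exact this.2 rfl (hs y)
  | ex ψ ih =>
      intro r a b q ps env₁ env₂ henv hroot hqd hab hba hD pol hb
      simp only [FOFormula.qd] at hqd
      obtain ⟨rr, rfl⟩ : ∃ rr, r = rr + 1 := ⟨r - 1, by omega⟩
      have hqd' : ψ.qd ≤ rr := by omega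
      constructor <;> intro hpol <;> subst hpol
      · -- pol = true : Spoiler moves on T₁ (side true)
        have hX : ψ.aqdAux true (some QKind.ex) < a ∧ 1 ≤ a :=
          qbound_sideT hba q (by simpa [FOFormula.aqdAux] using hb)
        rintro ⟨x, hs⟩
        obtain ⟨y, hDy⟩ := hD.2.1 hX.2 x
        have henv' : ∀ i, ((fun n => match n with | 0 => x | Nat.succ k => env₁ k) i,
            (fun n => match n with | 0 => y | Nat.succ k => env₂ k) i) ∈ ((x, y) :: ps) := by
          intro i; cases i with
          | zero => exact List.mem_cons_self
          | succ k => exact List.mem_cons_of_mem _ (henv k)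
        have := ih rr a (a - 1) (some QKind.ex) ((x, y) :: ps) _ _
          henv' (List.mem_cons_of_mem _ hroot) hqd' (by omega) (by omega) hDy true
          (by simpa [qbound] using hX.1)
        exact ⟨y, this.1 rfl hs⟩
      · -- pol = false : Spoiler moves on T₂ (side false)
        have hX : ψ.aqdAux false (some QKind.all) < b ∧ 1 ≤ b :=
          qbound_sideF hab q (by simpa [FOFormula.aqdAux] using hb)
        rintro ⟨w, hs⟩
        obtain ⟨x, hDx⟩ := hD.2.2 hX.2 w
        have henv' : ∀ i, ((fun n => match n with | 0 => x | Nat.succ k => env₁ k) i,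
            (fun n => match n with | 0 => w | Nat.succ k => env₂ k) i) ∈ ((x, w) :: ps) := by
          intro i; cases i with
          | zero => exact List.mem_cons_self
          | succ k => exact List.mem_cons_of_mem _ (henv k)
        have := ih rr (b - 1) b (some QKind.all) ((x, w) :: ps) _ _
          henv' (List.mem_cons_of_mem _ hroot) hqd' (by omega) (by omega) hDx false
          (by simpa [qbound] using hX.1)
        exact ⟨x, this.2 rfl hs⟩
/-! ## Semantics of `KEIN` via a semantic predicate -/

def Pprop (T : RTree) : ℕ → T.V → Prop
  | 0, v => ∀ u, T.parent u ≠ some v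
  | i + 1, v => ∀ u, T.parent u = some v → ¬ Pprop T i u

lemma Pform_sat (T : RTree) : ∀ (i : ℕ) (env : ℕ → T.V),
    (Pform i).Sat T env ↔ Pprop T i (env 0) := by
  intro i
  induction i with
  | zero =>
      intro env
      simp only [Pform, FOFormula.Sat, FOTerm.eval, Pprop]
  | succ i ih =>
      intro env
      simp only [Pform, FOFormula.Sat, FOTerm.eval, Pprop]
      constructor
      · intro h u hu
        have := h u hu
        rwa [ih] at this
      · intro h u hu
        have := h u hu
        rwa [ih]
  termination_by i => i

lemma models_KEIN (T : RTree) (i : ℕ) : Models T (KEIN i) ↔ Pprop T i T.root := by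
  cases i with
  | zero =>
      simp only [Models, KEIN, FOFormula.Sat, FOTerm.eval, Pprop]
  | succ i =>
      simp only [Models, KEIN, FOFormula.Sat, FOTerm.eval, Pprop]
      constructor
      · intro h u hu
        have := h u hu
        rwa [Pform_sat] at this
      · intro h u hu
        have := h u hu
        rwa [Pform_sat]

/-! ## Basic facts about `hang` -/

lemma hang_parent_inl (n : ℕ) (f : Fin n → RTree) (u : Unit) :
    (hang n f).parent (Sum.inl u) = none := rfl

lemma hang_root (n : ℕ) (f : Fin n → RTree) : (hang n f).root = Sum.inl () := rfl

lemma hang_parent_inr (n : ℕ) (f : Fin n → RTree) (i : Fin n) (w : (f i).V) :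
    (hang n f).parent (Sum.inr ⟨i, w⟩) =
      match (f i).parent w with
      | none => some (Sum.inl ())
      | some w' => some (Sum.inr ⟨i, w'⟩) := rfl

lemma hang_parent_eq_inl_iff (n : ℕ) (f : Fin n → RTree) (i : Fin n) (w : (f i).V) (u : Unit) :
    (hang n f).parent (Sum.inr ⟨i, w⟩) = some (Sum.inl u) ↔ (f i).parent w = none := by
  rw [hang_parent_inr]
  cases u
  cases hp : (f i).parent w
  · exact ⟨fun _ => rfl, fun _ => rfl⟩
  · exact ⟨fun h => (by cases h), fun h => (by cases h)⟩

lemma hang_parent_comp {n : ℕ} {f : Fin n → RTree} {i : Fin n} {w : (f i).V}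
    {v' : (hang n f).V} (h : (hang n f).parent (Sum.inr ⟨i, w⟩) = some v') :
    (v' = Sum.inl () ∧ (f i).parent w = none) ∨
      (∃ w₀, (f i).parent w = some w₀ ∧ v' = Sum.inr ⟨i, w₀⟩) := by
  rw [hang_parent_inr] at h
  cases hp : (f i).parent w with
  | none => rw [hp] at h; injection h with h; exact Or.inl ⟨h.symm, rfl⟩
  | some w₀ => rw [hp] at h; injection h with h; exact Or.inr ⟨w₀, rfl, h.symm⟩

lemma sum_sigma_inj {n : ℕ} {β : Fin n → Type} {i j : Fin n} {w : β i} {w' : β j}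
    (h : (Sum.inr ⟨i, w⟩ : Unit ⊕ Σ k, β k) = Sum.inr ⟨j, w'⟩) : i = j ∧ HEq w w' := by
  have h2 : (⟨i, w⟩ : Σ k, β k) = ⟨j, w'⟩ := by injection h
  exact Sigma.mk.inj_iff.mp h2

lemma hang_parent_inr_same {n : ℕ} {f : Fin n → RTree} {i : Fin n} {w w' : (f i).V} :
    (hang n f).parent (Sum.inr ⟨i, w⟩) = some (Sum.inr ⟨i, w'⟩) ↔ (f i).parent w = some w' := by
  constructor
  · intro h
    rcases hang_parent_comp h with ⟨h1, -⟩ | ⟨w₀, hp, h1⟩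
    · exact absurd h1 (by simp)
    · obtain ⟨-, hw⟩ := sum_sigma_inj h1
      rw [hp, eq_of_heq hw]
  · intro h
    rw [hang_parent_inr, h]; rfl

lemma hang_parent_inr_ne {n : ℕ} {f : Fin n → RTree} {i j : Fin n} (hij : i ≠ j)
    (w : (f i).V) (w' : (f j).V) :
    ¬ (hang n f).parent (Sum.inr ⟨i, w⟩) = some (Sum.inr ⟨j, w'⟩) := by
  intro h
  rcases hang_parent_comp h with ⟨h1, -⟩ | ⟨w₀, hp, h1⟩
  · exact absurd h1 (by simp)
  · exact hij (sum_sigma_inj h1.symm).1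

lemma hang_parent_eq_root_iff (n : ℕ) (f : Fin n → RTree) (i : Fin n) (w : (f i).V) :
    (hang n f).parent (Sum.inr ⟨i, w⟩) = some ((hang n f).root) ↔ (f i).parent w = none := by
  rw [hang_root]; exact hang_parent_eq_inl_iff n f i w ()

lemma Pprop_hang (n : ℕ) (f : Fin n → RTree) :
    ∀ (i : ℕ) (j : Fin n) (w : (f j).V),
      Pprop (hang n f) i (Sum.inr ⟨j, w⟩) ↔ Pprop (f j) i w := by
  intro i
  induction i with
  | zero =>
      intro j w
      simp only [Pprop]
      constructor
      · intro h u hu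
        exact h (Sum.inr ⟨j, u⟩) (hang_parent_inr_same.mpr hu)
      · intro h u hu
        cases u with
        | inl => simp [hang_parent_inl] at hu
        | inr p =>
            rcases p with ⟨j', u'⟩
            rcases hang_parent_comp hu with ⟨h1, -⟩ | ⟨w₀, hp, h1⟩
            · exact absurd h1 (by simp)
            · obtain ⟨hjj, hw⟩ := sum_sigma_inj h1
              subst hjj
              rw [← eq_of_heq hw] at hp
              exact h u' hp
  | succ i ih =>
      intro j w
      simp only [Pprop]
      constructor
      · intro h u hu hP
        exact h (Sum.inr ⟨j, u⟩) (hang_parent_inr_same.mpr hu) ((ih j u).mpr hP)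
      · intro h u hu hP
        cases u with
        | inl => simp [hang_parent_inl] at hu
        | inr p =>
            rcases p with ⟨j', u'⟩
            rcases hang_parent_comp hu with ⟨h1, -⟩ | ⟨w₀, hp, h1⟩
            · exact absurd h1 (by simp)
            · obtain ⟨hjj, hw⟩ := sum_sigma_inj h1
              subst hjj
              rw [← eq_of_heq hw] at hp
              exact h u' hp ((ih j u').mp hP)

lemma Pprop_tcast {S T : RTree} (h : S = T) (i : ℕ) (v : S.V) :
    Pprop T i (tcast h v) ↔ Pprop S i v := by subst h; rw [tcast_rfl]
/-! ## `single` and `hang` are trees; models facts -/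

lemma TreePair_zero_1 (m : ℕ) : (TreePair m 0).1 = single := rfl
lemma TreePair_zero_2 (m : ℕ) : (TreePair m 0).2 = hang m (fun _ => single) := rfl
lemma TreePair_succ_1 (m s : ℕ) :
    (TreePair m (s+1)).1 = hang (m+1) (fun _ => (TreePair m s).2) := rfl
lemma TreePair_succ_2 (m s : ℕ) :
    (TreePair m (s+1)).2 =
      hang (m+1) (fun i => if i.1 = m then (TreePair m s).1 else (TreePair m s).2) := rfl

lemma parentIter_succ' (T : RTree) : ∀ (k : ℕ) (v : T.V),
    T.parentIter (k + 1) v = (T.parentIter k v).bind T.parent := by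
  intro k
  induction k with
  | zero =>
      intro v
      cases hp : T.parent v <;> simp [RTree.parentIter, hp]
  | succ k ih =>
      intro v
      cases hp : T.parent v with
      | none => simp [RTree.parentIter, hp]
      | some w =>
          have h1 : T.parentIter (k + 1 + 1) v = T.parentIter (k + 1) w := by
            show (T.parent v).bind _ = _
            rw [hp]; rfl
          rw [h1, ih w]
          congr 1
          rw [show T.parentIter (k + 1) v = (T.parent v).bind (T.parentIter k) from rfl, hp]
          rfl

lemma single_isTree : single.IsTree := by
  refine ⟨fun v => ?_, fun v => ⟨0, rfl⟩, fun v => ?_⟩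
  · exact ⟨fun _ => by cases v; rfl, fun _ => rfl⟩
  · have : {u : single.V | single.parent u = some v} = ∅ := by
      ext u; simp [single]; exact Iff.rfl
    rw [this]; exact Set.finite_empty

lemma hang_parentIter_inr (n : ℕ) (f : Fin n → RTree) (i : Fin n) :
    ∀ (k : ℕ) (w w' : (f i).V), (f i).parentIter k w = some w' →
      (hang n f).parentIter k (Sum.inr ⟨i, w⟩) = some (Sum.inr ⟨i, w'⟩) := by
  intro k
  induction k with
  | zero =>
      intro w w' h
      simp only [RTree.parentIter] at h ⊢
      injection h with h; rw [h]; rfl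
  | succ k ih =>
      intro w w' h
      show ((hang n f).parent (Sum.inr ⟨i, w⟩)).bind _ = _
      replace h : ((f i).parent w).bind ((f i).parentIter k) = some w' := h
      cases hp : (f i).parent w with
      | none => rw [hp] at h; simp at h
      | some w₀ =>
          rw [hp] at h
          simp only [Option.bind_some] at h
          rw [hang_parent_inr, hp]
          exact ih w₀ w' h

lemma hang_isTree (n : ℕ) (f : Fin n → RTree) (hf : ∀ i, (f i).IsTree) :
    (hang n f).IsTree := by
  refine ⟨fun v => ?_, fun v => ?_, fun v => ?_⟩
  · cases v with
    | inl u => exact ⟨fun _ => by cases u; rfl, fun _ => rfl⟩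
    | inr p =>
        rcases p with ⟨i, w⟩
        rw [hang_parent_inr]
        constructor
        · intro h; cases hp : (f i).parent w <;> rw [hp] at h <;> simp at h
        · intro h; exact absurd h (by simp [hang_root])

  · cases v with
    | inl u => exact ⟨0, by simp [RTree.parentIter, hang_root]⟩
    | inr p =>
        rcases p with ⟨i, w⟩
        obtain ⟨k, hk⟩ := (hf i).2.1 w
        refine ⟨k + 1, ?_⟩
        rw [parentIter_succ' (hang n f) k (Sum.inr ⟨i, w⟩), hang_parentIter_inr n f i k w _ hk]
        show (hang n f).parent (Sum.inr ⟨i, (f i).root⟩) = _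
        rw [hang_parent_inr, ((hf i).1 _).mpr rfl]
        rfl
  · cases v with
    | inl u =>
        have hsub : {x : (hang n f).V | (hang n f).parent x = some (Sum.inl u)} ⊆
            Set.range (fun i : Fin n => (Sum.inr ⟨i, (f i).root⟩ : (hang n f).V)) := by
          intro x hx
          cases x with
          | inl u' => cases hx
          | inr p =>
              rcases p with ⟨i, w⟩
              have hw : (f i).parent w = none := (hang_parent_eq_inl_iff n f i w u).mp hx
              have : w = (f i).root := ((hf i).1 w).mp hw
              exact ⟨i, by rw [this]⟩
        exact Set.Finite.subset (Set.finite_range _) hsub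
    | inr p =>
        rcases p with ⟨i, w⟩
        have hsub : {x : (hang n f).V | (hang n f).parent x = some (Sum.inr ⟨i, w⟩)} ⊆
            (fun w' : (f i).V => (Sum.inr ⟨i, w'⟩ : (hang n f).V)) ''
              {w' | (f i).parent w' = some w} := by
          intro x hx
          cases x with
          | inl u' => cases hx
          | inr p' =>
              rcases p' with ⟨i', w'⟩
              rcases hang_parent_comp hx with ⟨h1, -⟩ | ⟨w₀, hp, h1⟩
              · exact absurd h1 (by simp)
              · obtain ⟨hii, hww⟩ := sum_sigma_inj h1
                subst hii
                rw [← eq_of_heq hww] at hp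
                exact ⟨w', hp, rfl⟩
        exact Set.Finite.subset (Set.Finite.image _ ((hf i).2.2 w)) hsub

lemma treePair_isTree (m s : ℕ) : (TreePair m s).1.IsTree ∧ (TreePair m s).2.IsTree := by
  induction s with
  | zero => exact ⟨single_isTree, hang_isTree _ _ (fun _ => single_isTree)⟩
  | succ s ih =>
      constructor
      · exact hang_isTree _ _ (fun _ => ih.2)
      · refine hang_isTree _ _ (fun i => ?_)
        by_cases h : i.1 = m <;> simp [h, ih.1, ih.2]

/-- `T₁` satisfies `KEIN_s`, `T₂` does not (for `m ≥ 1`). -/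
lemma treePair_models (m : ℕ) (hm : 1 ≤ m) :
    ∀ s : ℕ, Pprop (TreePair m s).1 s (TreePair m s).1.root ∧
      ¬ Pprop (TreePair m s).2 s (TreePair m s).2.root := by
  intro s
  induction s with
  | zero =>
      constructor
      · intro u hu
        simp [single, TreePair] at hu
      · rw [TreePair_zero_2]
        intro h
        have := h (Sum.inr ⟨⟨0, hm⟩, PUnit.unit⟩)
        exact this ((hang_parent_eq_root_iff m (fun _ => single) ⟨0, hm⟩ PUnit.unit).mpr rfl)
  | succ s ih =>
      constructor
      · rw [TreePair_succ_1]
        intro u hu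
        show ¬ Pprop _ s u
        rcases u with u' | ⟨i, w⟩
        · rw [hang_root] at hu
          exact absurd hu (by simp [hang_parent_inl])
        · have hw := (hang_parent_eq_root_iff (m+1) (fun _ => (TreePair m s).2) i w).mp hu
          have hwr : w = (TreePair m s).2.root := (((treePair_isTree m s).2).1 w).mp hw
          subst hwr
          rw [Pprop_hang]
          exact ih.2
      · rw [TreePair_succ_2]
        intro h
        have hmlt : m < m + 1 := Nat.lt_succ_self m
        have hGW : (if (⟨m, hmlt⟩ : Fin (m+1)).1 = m then (TreePair m s).1 else (TreePair m s).2)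
            = (TreePair m s).1 := by simp
        have hchild := h (Sum.inr ⟨⟨m, hmlt⟩, tcast hGW.symm (TreePair m s).1.root⟩)
        apply hchild
        · rw [hang_parent_eq_root_iff, tcast_parent]
          rw [(((treePair_isTree m s).1).1 _).mpr rfl]
          rfl
        · rw [Pprop_hang, Pprop_tcast]
          exact ih.1
/-! ## The strategy for the pair `(T₁^{(s+1)}, T₂^{(s+1)})` -/

lemma tcast_map_some {S T : RTree} (h : S = T) (o : Option S.V) (v : S.V) :
    o.map (tcast h) = some (tcast h v) ↔ o = some v := by
  subst h; cases o <;> simp [tcast_rfl]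

lemma tcast_map_none {S T : RTree} (h : S = T) (o : Option S.V) :
    o.map (tcast h) = none ↔ o = none := by cases o <;> simp

lemma inr_eq_inr_same {n : ℕ} {β : Fin n → Type} {i : Fin n} {u w : β i} :
    (Sum.inr ⟨i, u⟩ : Unit ⊕ Σ k, β k) = Sum.inr ⟨i, w⟩ ↔ u = w := by
  constructor
  · intro h; exact eq_of_heq (sum_sigma_inj h).2
  · rintro rfl; rfl

lemma inr_ne_inr {n : ℕ} {β : Fin n → Type} {i j : Fin n} (hij : i ≠ j)
    {u : β i} {w : β j} : (Sum.inr ⟨i, u⟩ : Unit ⊕ Σ k, β k) ≠ Sum.inr ⟨j, w⟩ :=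
  fun h => hij (sum_sigma_inj h).1

lemma exists_not_mem_list {n : ℕ} (L : List (Fin n)) (h : L.length < n) :
    ∃ j : Fin n, j ∉ L := by
  by_contra hc
  push_neg at hc
  have h1 : (Finset.univ : Finset (Fin n)) ⊆ L.toFinset := fun x _ => List.mem_toFinset.mpr (hc x)
  have h2 := Finset.card_le_card h1
  rw [Finset.card_univ, Fintype.card_fin] at h2
  have h3 := L.toFinset_card_le
  omega

section Strategy

variable (m s : ℕ)

/-- abbreviations for the level-`s` trees -/
@[reducible] def Wc : RTree := (TreePair m s).1
@[reducible] def Uc : RTree := (TreePair m s).2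
@[reducible] def Gf : Fin (m+1) → RTree := fun i => if i.1 = m then Wc m s else Uc m s
@[reducible] def TA : RTree := hang (m+1) (fun _ => Uc m s)
@[reducible] def TB : RTree := hang (m+1) (Gf m s)
def mlast : Fin (m+1) := ⟨m, Nat.lt_succ_self m⟩

lemma TA_eq : TA m s = (TreePair m (s+1)).1 := rfl
lemma TB_eq : TB m s = (TreePair m (s+1)).2 := rfl
lemma Gf_mlast : Gf m s (mlast m) = Wc m s := if_pos rfl
lemma Gf_ne {j : Fin (m+1)} (h : j.1 ≠ m) : Gf m s j = Uc m s := if_neg h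


lemma TA_root_def : (TA m s).root = Sum.inl () := rfl
lemma TB_root_def : (TB m s).root = Sum.inl () := rfl
lemma TA_parent_root : (TA m s).parent (TA m s).root = none := rfl
lemma TB_parent_root : (TB m s).parent (TB m s).root = none := rfl

lemma TA_parent_eq_root_iff (i : Fin (m+1)) (u : (Uc m s).V) :
    (TA m s).parent (Sum.inr ⟨i, u⟩) = some (TA m s).root ↔ (Uc m s).parent u = none :=
  hang_parent_eq_root_iff (m+1) (fun _ => Uc m s) i u

lemma TB_parent_eq_root_iff (j : Fin (m+1)) (w : (Gf m s j).V) :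
    (TB m s).parent (Sum.inr ⟨j, w⟩) = some (TB m s).root ↔ (Gf m s j).parent w = none :=
  hang_parent_eq_root_iff (m+1) (Gf m s) j w

lemma TA_parent_inr_same {i : Fin (m+1)} {u u' : (Uc m s).V} :
    (TA m s).parent (Sum.inr ⟨i, u⟩) = some (Sum.inr ⟨i, u'⟩) ↔
      (Uc m s).parent u = some u' :=
  hang_parent_inr_same

lemma TB_parent_inr_same {j : Fin (m+1)} {w w' : (Gf m s j).V} :
    (TB m s).parent (Sum.inr ⟨j, w⟩) = some (Sum.inr ⟨j, w'⟩) ↔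
      (Gf m s j).parent w = some w' :=
  hang_parent_inr_same

lemma TA_parent_inr_ne {i i' : Fin (m+1)} (h : i ≠ i') (u : (Uc m s).V) (u' : (Uc m s).V) :
    ¬ (TA m s).parent (Sum.inr ⟨i, u⟩) = some (Sum.inr ⟨i', u'⟩) :=
  hang_parent_inr_ne (f := fun _ => Uc m s) h u u'

lemma TB_parent_inr_ne {j j' : Fin (m+1)} (h : j ≠ j') (w : (Gf m s j).V) (w' : (Gf m s j').V) :
    ¬ (TB m s).parent (Sum.inr ⟨j, w⟩) = some (Sum.inr ⟨j', w'⟩) :=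
  hang_parent_inr_ne (f := Gf m s) h w w'

lemma TA_inr_eq_same {i : Fin (m+1)} {u u' : (Uc m s).V} :
    (Sum.inr ⟨i, u⟩ : (TA m s).V) = Sum.inr ⟨i, u'⟩ ↔ u = u' := inr_eq_inr_same

lemma TB_inr_eq_same {j : Fin (m+1)} {w w' : (Gf m s j).V} :
    (Sum.inr ⟨j, w⟩ : (TB m s).V) = Sum.inr ⟨j, w'⟩ ↔ w = w' := inr_eq_inr_same

lemma TA_inr_ne {i i' : Fin (m+1)} (h : i ≠ i') {u : (Uc m s).V} {u' : (Uc m s).V} :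
    (Sum.inr ⟨i, u⟩ : (TA m s).V) ≠ Sum.inr ⟨i', u'⟩ := inr_ne_inr h

lemma TB_inr_ne {j j' : Fin (m+1)} (h : j ≠ j') {w : (Gf m s j).V} {w' : (Gf m s j').V} :
    (Sum.inr ⟨j, w⟩ : (TB m s).V) ≠ Sum.inr ⟨j', w'⟩ := inr_ne_inr h

lemma TA_root_ne_inr {i : Fin (m+1)} {u : (Uc m s).V} :
    (TA m s).root ≠ Sum.inr ⟨i, u⟩ := by rw [TA_root_def]; exact fun h => by cases h

lemma TB_root_ne_inr {j : Fin (m+1)} {w : (Gf m s j).V} :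
    (TB m s).root ≠ Sum.inr ⟨j, w⟩ := by rw [TB_root_def]; exact fun h => by cases h

/-- The shape invariant for positions of the outer game. -/
def Shape (M : List (Fin (m+1) × Fin (m+1)))
    (osub : Option (Fin (m+1) × List ((Wc m s).V × (Uc m s).V)))
    (p : (TA m s).V × (TB m s).V) : Prop :=
  p = ((TA m s).root, (TB m s).root) ∨
  (∃ (i j : Fin (m+1)) (hj : j.1 ≠ m) (u : (Uc m s).V),
      (i, j) ∈ M ∧ p = (Sum.inr ⟨i, u⟩, Sum.inr ⟨j, tcast (Gf_ne m s hj).symm u⟩)) ∨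
  (∃ (i₀ : Fin (m+1)) (ts : List ((Wc m s).V × (Uc m s).V)) (x : (Wc m s).V) (y : (Uc m s).V),
      osub = some (i₀, ts) ∧ (x, y) ∈ ts ∧
      p = (Sum.inr ⟨i₀, y⟩, Sum.inr ⟨mlast m, tcast (Gf_mlast m s).symm x⟩))

lemma shape_mono_M {M M' osub p} (hMM : ∀ q ∈ M, q ∈ M')
    (h : Shape m s M osub p) : Shape m s M' osub p := by
  rcases h with h | ⟨i, j, hj, u, hM, hp⟩ | h
  · exact Or.inl h
  · exact Or.inr (Or.inl ⟨i, j, hj, u, hMM _ hM, hp⟩)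
  · exact Or.inr (Or.inr h)

lemma shape_mono_sub {M i₀ ts ts' p} (hts : ∀ q ∈ ts, q ∈ ts')
    (h : Shape m s M (some (i₀, ts)) p) : Shape m s M (some (i₀, ts')) p := by
  rcases h with h | h | ⟨i₁, ts₁, x, y, hos, hmem, hp⟩
  · exact Or.inl h
  · exact Or.inr (Or.inl h)
  · rcases Option.some.inj hos with h2
    have hi : i₁ = i₀ := (Prod.mk.inj h2).1.symm
    have ht : ts₁ = ts := (Prod.mk.inj h2).2.symm
    subst hi; subst ht
    exact Or.inr (Or.inr ⟨i₁, ts', x, y, rfl, hts _ hmem, hp⟩)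

lemma shape_none_to_some {M osub' p} (h : Shape m s M none p) : Shape m s M osub' p := by
  rcases h with h | h | ⟨i₁, ts₁, x, y, hos, -⟩
  · exact Or.inl h
  · exact Or.inr (Or.inl h)
  · exact absurd hos (by simp)

/-- The key: shape positions are good. -/
lemma shape_good (M : List (Fin (m+1) × Fin (m+1)))
    (osub : Option (Fin (m+1) × List ((Wc m s).V × (Uc m s).V)))
    (hMinj : ∀ q ∈ M, ∀ q' ∈ M, q.1 = q'.1 ∨ q.2 = q'.2 → q = q')
    (hsub : ∀ i₀ ts, osub = some (i₀, ts) →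
      (∀ q ∈ M, q.1 ≠ i₀) ∧ ((Wc m s).root, (Uc m s).root) ∈ ts ∧
        GoodPairs (Wc m s) (Uc m s) ts)
    (ps : List ((TA m s).V × (TB m s).V)) (hps : ∀ p ∈ ps, Shape m s M osub p) :
    GoodPairs (TA m s) (TB m s) ps := by
  have treeW : (Wc m s).IsTree := (treePair_isTree m s).1
  have treeU : (Uc m s).IsTree := (treePair_isTree m s).2
  intro p hp q hq
  rcases hps p hp with hP | ⟨i, j, hj, u, hM, hP⟩ | ⟨i₀, ts, x, y, hos, hmem, hP⟩ <;>
    rcases hps q hq with hQ | ⟨i', j', hj', u', hM', hQ⟩ | ⟨i₀', ts', x', y', hos', hmem', hQ⟩ <;>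
      subst hP <;> subst hQ <;> dsimp only
  -- (A, A)
  · exact ⟨by simp [TA_parent_root, TB_parent_root], by simp⟩
  -- (A, B)
  · refine ⟨by simp [TA_parent_root, TB_parent_root], ?_⟩
    exact ⟨fun h => absurd h (TA_root_ne_inr m s), fun h => absurd h (TB_root_ne_inr m s)⟩
  -- (A, C)
  · refine ⟨by simp [TA_parent_root, TB_parent_root], ?_⟩
    exact ⟨fun h => absurd h (TA_root_ne_inr m s), fun h => absurd h (TB_root_ne_inr m s)⟩
  -- (B, A)
  · constructor
    · rw [TA_parent_eq_root_iff, TB_parent_eq_root_iff, tcast_parent, tcast_map_none]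
    · exact ⟨fun h => absurd h.symm (TA_root_ne_inr m s), fun h => absurd h.symm (TB_root_ne_inr m s)⟩
  -- (B, B)
  · by_cases hii : i = i'
    · subst hii
      have heq := hMinj _ hM _ hM' (Or.inl rfl)
      have hjj : j = j' := (Prod.mk.inj heq).2
      subst hjj
      constructor
      · erw [TA_parent_inr_same, TB_parent_inr_same, tcast_parent, tcast_map_some]
      · erw [TA_inr_eq_same, TB_inr_eq_same, tcast_inj]
    · have hjj : j ≠ j' := by
        intro hc; subst hc
        exact hii ((Prod.mk.inj (hMinj _ hM _ hM' (Or.inr rfl))).1)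
      constructor
      · exact ⟨fun h => absurd h (TA_parent_inr_ne m s hii _ _),
          fun h => absurd h (TB_parent_inr_ne m s hjj _ _)⟩
      · exact ⟨fun h => absurd h (TA_inr_ne m s hii),
          fun h => absurd h (TB_inr_ne m s hjj)⟩
  -- (B, C)
  · have hii : i ≠ i₀' := (hsub _ _ hos').1 _ hM
    have hjm : j ≠ mlast m := fun hc => hj (by rw [hc]; rfl)
    constructor
    · exact ⟨fun h => absurd h (TA_parent_inr_ne m s hii _ _),
        fun h => absurd h (TB_parent_inr_ne m s hjm _ _)⟩
    · exact ⟨fun h => absurd h (TA_inr_ne m s hii),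
        fun h => absurd h (TB_inr_ne m s hjm)⟩
  -- (C, A)
  · obtain ⟨hiM, hrts, hgood⟩ := hsub _ _ hos
    have hkey := hgood _ hmem _ hrts
    constructor
    · rw [TA_parent_eq_root_iff, TB_parent_eq_root_iff, tcast_parent, tcast_map_none]
      rw [treeU.1, treeW.1]
      exact hkey.2.symm
    · exact ⟨fun h => absurd h.symm (TA_root_ne_inr m s), fun h => absurd h.symm (TB_root_ne_inr m s)⟩
  -- (C, B)
  · have hii : i₀ ≠ i' := fun hc => (hsub _ _ hos).1 _ hM' hc.symm
    have hjm : mlast m ≠ j' := fun hc => hj' (by rw [← hc]; rfl)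
    constructor
    · exact ⟨fun h => absurd h (TA_parent_inr_ne m s hii _ _),
        fun h => absurd h (TB_parent_inr_ne m s hjm _ _)⟩
    · exact ⟨fun h => absurd h (TA_inr_ne m s hii),
        fun h => absurd h (TB_inr_ne m s hjm)⟩
  -- (C, C)
  · obtain ⟨hiM, hrts, hgood⟩ := hsub _ _ hos
    rw [hos] at hos'
    rcases Option.some.inj hos' with h2
    have hi : i₀' = i₀ := (Prod.mk.inj h2.symm).1
    have ht : ts' = ts := (Prod.mk.inj h2.symm).2
    subst hi; subst ht
    have hkey := hgood _ hmem _ hmem'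
    constructor
    · erw [TA_parent_inr_same, TB_parent_inr_same, tcast_parent, tcast_map_some]
      exact hkey.1.symm
    · erw [TA_inr_eq_same, TB_inr_eq_same, tcast_inj]
      exact hkey.2.symm

end Strategy
lemma tcast_tcast' {S T : RTree} (h : S = T) (v : S.V) :
    tcast h.symm (tcast h v) = v := by subst h; simp [tcast_rfl]

section Outer

variable (m s : ℕ)

lemma outer (HC : ∀ r a b, r ≤ m → b ≤ s → a ≤ b + 1 → b ≤ a + 1 →
      DWin (Wc m s) (Uc m s) r a b [((Wc m s).root, (Uc m s).root)]) :
    ∀ (r a b : ℕ) (M : List (Fin (m+1) × Fin (m+1)))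
      (osub : Option (Fin (m+1) × List ((Wc m s).V × (Uc m s).V)))
      (ps : List ((TA m s).V × (TB m s).V)),
      b ≤ s + 1 → a ≤ b + 1 → b ≤ a + 1 →
      M.length + (if osub.isSome then 1 else 0) + r ≤ m →
      (∀ q ∈ M, (q.2 : Fin (m+1)).1 ≠ m) →
      (∀ q ∈ M, ∀ q' ∈ M, q.1 = q'.1 ∨ q.2 = q'.2 → q = q') →
      (∀ i₀ ts, osub = some (i₀, ts) → (∀ q ∈ M, q.1 ≠ i₀) ∧
          ((Wc m s).root, (Uc m s).root) ∈ ts ∧ DWin (Wc m s) (Uc m s) r b a ts) →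
      (∀ p ∈ ps, Shape m s M osub p) →
      DWin (TA m s) (TB m s) r a b ps := by
  intro r
  induction r with
  | zero =>
      intro a b M osub ps _ _ _ _ _ hMinj hsub hps
      exact shape_good m s M osub hMinj
        (fun i₀ ts h => ⟨(hsub _ _ h).1, (hsub _ _ h).2.1, (hsub _ _ h).2.2.good⟩) ps hps
  | succ r ih =>
      intro a b M osub ps hb hab hba hlen hMne hMinj hsub hps
      refine ⟨shape_good m s M osub hMinj
        (fun i₀ ts h => ⟨(hsub _ _ h).1, (hsub _ _ h).2.1, (hsub _ _ h).2.2.good⟩) ps hps,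
        ?_, ?_⟩
      · -- Spoiler plays on TA
        intro ha1 x
        rcases x with u | ⟨i, u⟩
        · -- the root of TA
          refine ⟨(TB m s).root,
            ih a (a-1) M osub ((Sum.inl u, (TB m s).root) :: ps)
              (by omega) (by omega) (by omega) (by omega) hMne hMinj ?_ ?_⟩
          · intro i₀ ts h
            obtain ⟨h1, h2, h3⟩ := hsub _ _ h
            exact ⟨h1, h2, h3.mono (Nat.le_succ r) (by omega) le_rfl⟩
          · intro p hp
            rcases List.mem_cons.mp hp with rfl | hp
            · exact Or.inl (by cases u; rfl)
            · exact hps p hp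
        · by_cases hmem : ∃ q ∈ M, q.1 = i
          · -- matched component
            obtain ⟨⟨i1, j⟩, hqM, hq1⟩ := hmem
            dsimp only at hq1
            subst hq1
            have hj := hMne _ hqM
            refine ⟨Sum.inr ⟨j, tcast (Gf_ne m s hj).symm u⟩,
              ih a (a-1) M osub (_ :: ps)
                (by omega) (by omega) (by omega) (by omega) hMne hMinj ?_ ?_⟩
            · intro i₀ ts h
              obtain ⟨h1, h2, h3⟩ := hsub _ _ h
              exact ⟨h1, h2, h3.mono (Nat.le_succ r) (by omega) le_rfl⟩
            · intro p hp
              rcases List.mem_cons.mp hp with rfl | hp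
              · exact Or.inr (Or.inl ⟨i1, j, hj, u, hqM, rfl⟩)
              · exact hps p hp
          · by_cases hsubm : ∃ ts, osub = some (i, ts)
            · -- move in the special subgame, Spoiler side TA (sub side U)
              obtain ⟨ts, hos⟩ := hsubm
              subst hos
              obtain ⟨hiM, hrts, hDW⟩ := hsub _ _ rfl
              obtain ⟨x', hx'⟩ := hDW.2.2 ha1 u
              refine ⟨Sum.inr ⟨mlast m, tcast (Gf_mlast m s).symm x'⟩,
                ih a (a-1) M (some (i, (x', u) :: ts)) (_ :: ps)
                  (by omega) (by omega) (by omega) (by simpa using by simp at hlen ⊢; omega) ?_ ?_ ?_ ?_⟩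
              · exact hMne
              · exact hMinj
              · intro i₀ ts₀ h
                rcases Option.some.inj h with h2
                have hi : i = i₀ := (Prod.mk.inj h2).1
                have ht : (x', u) :: ts = ts₀ := (Prod.mk.inj h2).2
                subst hi; subst ht
                exact ⟨hiM, List.mem_cons_of_mem _ hrts, hx'⟩
              · intro p hp
                rcases List.mem_cons.mp hp with rfl | hp
                · exact Or.inr (Or.inr ⟨i, (x', u) :: ts, x', u, rfl,
                    List.mem_cons_self, rfl⟩)
                · exact shape_mono_sub m s (fun q hq => List.mem_cons_of_mem _ hq) (hps p hp)
            · -- fresh component on the TA side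
              obtain ⟨j, hjL⟩ := exists_not_mem_list (mlast m :: M.map Prod.snd)
                (by simp; omega)
              have hj1 : j ≠ mlast m := fun hc => hjL (hc ▸ List.mem_cons_self)
              have hj2 : j ∉ M.map Prod.snd := fun hc => hjL (List.mem_cons_of_mem _ hc)
              have hjm : j.1 ≠ m := fun hc => hj1 (Fin.ext hc)
              refine ⟨Sum.inr ⟨j, tcast (Gf_ne m s hjm).symm u⟩,
                ih a (a-1) ((i, j) :: M) osub (_ :: ps)
                  (by omega) (by omega) (by omega) (by simp at hlen ⊢; omega) ?_ ?_ ?_ ?_⟩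
              · intro q hq
                rcases List.mem_cons.mp hq with rfl | hq
                · exact hjm
                · exact hMne _ hq
              · intro q hq q' hq'
                rcases List.mem_cons.mp hq with rfl | hq <;>
                  rcases List.mem_cons.mp hq' with h' | hq'
                · intro _; rw [h']
                · rintro (h1 | h2)
                  · exact absurd ⟨q', hq', h1.symm⟩ hmem
                  · exact absurd (List.mem_map.mpr ⟨q', hq', h2.symm⟩) hj2
                · subst h'
                  rintro (h1 | h2)
                  · exact absurd ⟨q, hq, h1⟩ hmem
                  · exact absurd (List.mem_map.mpr ⟨q, hq, h2⟩) hj2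
                · exact fun h => hMinj _ hq _ hq' h
              · intro i₀ ts h
                obtain ⟨h1, h2, h3⟩ := hsub _ _ h
                refine ⟨?_, h2, h3.mono (Nat.le_succ r) (by omega) le_rfl⟩
                intro q hq
                rcases List.mem_cons.mp hq with rfl | hq
                · intro hc; exact hsubm ⟨ts, by rw [← hc] at h; exact h⟩
                · exact h1 _ hq
              · intro p hp
                rcases List.mem_cons.mp hp with rfl | hp
                · exact Or.inr (Or.inl ⟨i, j, hjm, u, List.mem_cons_self, rfl⟩)
                · exact shape_mono_M m s (fun q hq => List.mem_cons_of_mem _ hq) (hps p hp)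
      · -- Spoiler plays on TB
        intro hb1 y
        rcases y with u | ⟨j, w⟩
        · -- the root of TB
          refine ⟨(TA m s).root,
            ih (b-1) b M osub (((TA m s).root, Sum.inl u) :: ps)
              (by omega) (by omega) (by omega) (by omega) hMne hMinj ?_ ?_⟩
          · intro i₀ ts h
            obtain ⟨h1, h2, h3⟩ := hsub _ _ h
            exact ⟨h1, h2, h3.mono (Nat.le_succ r) le_rfl (by omega)⟩
          · intro p hp
            rcases List.mem_cons.mp hp with rfl | hp
            · exact Or.inl (by cases u; rfl)
            · exact hps p hp
        · by_cases hjm : j.1 = m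
          · -- the special component of TB
            have hj : j = mlast m := Fin.ext hjm
            subst hj
            rcases hosub : osub with _ | ⟨i₀, ts⟩
            · -- create the subgame
              subst hosub
              have hlen' : M.length + (r + 1) ≤ m := by simpa using hlen
              obtain ⟨i₀, hi₀⟩ := exists_not_mem_list (M.map Prod.fst) (by simp; omega)
              have hD0 := HC (r+1) b (b-1) (by omega) (by omega) (by omega) (by omega)
              obtain ⟨y', hy'⟩ := hD0.2.1 hb1 (tcast (Gf_mlast m s) w)
              refine ⟨Sum.inr ⟨i₀, y'⟩,
                ih (b-1) b M (some (i₀, (tcast (Gf_mlast m s) w, y') ::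
                    [((Wc m s).root, (Uc m s).root)])) (_ :: ps)
                  (by omega) (by omega) (by omega) (by simp; omega) hMne hMinj ?_ ?_⟩
              · intro i₁ ts₁ h
                rcases Option.some.inj h with h2
                have hi : i₀ = i₁ := (Prod.mk.inj h2).1
                have ht : (tcast (Gf_mlast m s) w, y') ::
                    [((Wc m s).root, (Uc m s).root)] = ts₁ := (Prod.mk.inj h2).2
                subst hi; subst ht
                refine ⟨?_, List.mem_cons_of_mem _ (List.mem_singleton.mpr rfl), hy'⟩
                intro q hq hc
                exact hi₀ (List.mem_map.mpr ⟨q, hq, hc⟩)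
              · intro p hp
                rcases List.mem_cons.mp hp with rfl | hp
                · refine Or.inr (Or.inr ⟨i₀, _, tcast (Gf_mlast m s) w, y', rfl,
                    List.mem_cons_self, ?_⟩)
                  rw [tcast_tcast']; rfl
                · exact shape_none_to_some m s (hps p hp)
            · -- subgame exists, Spoiler side TB (sub side W)
              subst hosub
              obtain ⟨hiM, hrts, hDW⟩ := hsub _ _ rfl
              obtain ⟨y', hy'⟩ := hDW.2.1 hb1 (tcast (Gf_mlast m s) w)
              refine ⟨Sum.inr ⟨i₀, y'⟩,
                ih (b-1) b M (some (i₀, (tcast (Gf_mlast m s) w, y') :: ts)) (_ :: ps)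
                  (by omega) (by omega) (by omega) (by simp at hlen ⊢; omega) hMne hMinj ?_ ?_⟩
              · intro i₁ ts₁ h
                rcases Option.some.inj h with h2
                have hi : i₀ = i₁ := (Prod.mk.inj h2).1
                have ht : (tcast (Gf_mlast m s) w, y') :: ts = ts₁ := (Prod.mk.inj h2).2
                subst hi; subst ht
                exact ⟨hiM, List.mem_cons_of_mem _ hrts, hy'⟩
              · intro p hp
                rcases List.mem_cons.mp hp with rfl | hp
                · refine Or.inr (Or.inr ⟨i₀, _, tcast (Gf_mlast m s) w, y', rfl,
                    List.mem_cons_self, ?_⟩)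
                  rw [tcast_tcast']; rfl
                · exact shape_mono_sub m s (fun q hq => List.mem_cons_of_mem _ hq) (hps p hp)
          · -- an ordinary component of TB
            have hGU : Gf m s j = Uc m s := Gf_ne m s hjm
            by_cases hmem : ∃ q ∈ M, q.2 = j
            · obtain ⟨⟨i, j1⟩, hqM, hq2⟩ := hmem
              dsimp only at hq2
              subst hq2
              refine ⟨Sum.inr ⟨i, tcast hGU w⟩,
                ih (b-1) b M osub (_ :: ps)
                  (by omega) (by omega) (by omega) (by omega) hMne hMinj ?_ ?_⟩
              · intro i₀ ts h
                obtain ⟨h1, h2, h3⟩ := hsub _ _ h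
                exact ⟨h1, h2, h3.mono (Nat.le_succ r) le_rfl (by omega)⟩
              · intro p hp
                rcases List.mem_cons.mp hp with rfl | hp
                · refine Or.inr (Or.inl ⟨i, j1, hjm, tcast hGU w, hqM, ?_⟩)
                  rw [tcast_tcast']; rfl
                · exact hps p hp
            · -- fresh component on the TB side
              obtain ⟨i, hi⟩ := exists_not_mem_list
                ((osub.map Prod.fst).toList ++ M.map Prod.fst)
                (by rcases osub with _ | z <;> simp at hlen ⊢ <;> omega)
              have hi1 : i ∉ M.map Prod.fst := fun hc =>
                hi (List.mem_append.mpr (Or.inr hc))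
              refine ⟨Sum.inr ⟨i, tcast hGU w⟩,
                ih (b-1) b ((i, j) :: M) osub (_ :: ps)
                  (by omega) (by omega) (by omega) (by simp at hlen ⊢; omega) ?_ ?_ ?_ ?_⟩
              · intro q hq
                rcases List.mem_cons.mp hq with rfl | hq
                · exact hjm
                · exact hMne _ hq
              · intro q hq q' hq'
                rcases List.mem_cons.mp hq with rfl | hq <;>
                  rcases List.mem_cons.mp hq' with h' | hq'
                · intro _; rw [h']
                · rintro (h1 | h2)
                  · exact absurd (List.mem_map.mpr ⟨q', hq', h1.symm⟩) hi1
                  · exact absurd ⟨q', hq', h2.symm⟩ hmem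
                · subst h'
                  rintro (h1 | h2)
                  · exact absurd (List.mem_map.mpr ⟨q, hq, h1⟩) hi1
                  · exact absurd ⟨q, hq, h2⟩ hmem
                · exact fun h => hMinj _ hq _ hq' h
              · intro i₀ ts h
                obtain ⟨h1, h2, h3⟩ := hsub _ _ h
                refine ⟨?_, h2, h3.mono (Nat.le_succ r) le_rfl (by omega)⟩
                intro q hq
                rcases List.mem_cons.mp hq with rfl | hq
                · intro hc
                  dsimp only at hc
                  apply hi
                  apply List.mem_append.mpr
                  refine Or.inl ?_
                  rw [h]
                  simp [hc]
                · exact h1 _ hq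
              · intro p hp
                rcases List.mem_cons.mp hp with rfl | hp
                · refine Or.inr (Or.inl ⟨i, j, hjm, tcast hGU w,
                    List.mem_cons_self, ?_⟩)
                  rw [tcast_tcast']; rfl
                · exact shape_mono_M m s (fun q hq => List.mem_cons_of_mem _ hq) (hps p hp)

end Outer

lemma dwin_base (m : ℕ) : ∀ (r a b : ℕ)
    (ps : List ((TreePair m 0).1.V × (TreePair m 0).2.V)), b = 0 → a ≤ 1 →
    (∀ p ∈ ps, p = ((TreePair m 0).1.root, (TreePair m 0).2.root)) →
    DWin (TreePair m 0).1 (TreePair m 0).2 r a b ps := by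
  intro r
  induction r with
  | zero =>
      intro a b ps hb ha hps
      intro p hp q hq
      rw [hps p hp, hps q hq]
      refine ⟨?_, by simp⟩
      constructor
      · intro h; exact absurd h (by simp [TreePair, single])
      · intro h; exact absurd h (by simp [TreePair, hang_root, hang_parent_inl])
  | succ r ih =>
      intro a b ps hb ha hps
      refine ⟨?_, ?_, ?_⟩
      · have := ih 0 0 ps rfl (by omega) hps
        exact this.good
      · intro ha1 x
        refine ⟨(TreePair m 0).2.root, ih a (a - 1) _ (by omega) ha ?_⟩
        intro p hp
        rcases List.mem_cons.mp hp with rfl | hp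
        · cases x; rfl
        · exact hps p hp
      · intro hb1 _
        omega

lemma dwin_treePair (m : ℕ) : ∀ (s r a b : ℕ), r ≤ m → b ≤ s → a ≤ b + 1 → b ≤ a + 1 →
    DWin (TreePair m s).1 (TreePair m s).2 r a b
      [((TreePair m s).1.root, (TreePair m s).2.root)] := by
  intro s
  induction s with
  | zero =>
      intro r a b _ hb hab _
      exact dwin_base m r a b _ (by omega) (by omega) (fun p hp => List.mem_singleton.mp hp)
  | succ s ihs =>
      intro r a b hr hb hab hba
      exact outer m s (fun r' a' b' h1 h2 h3 h4 => ihs r' a' b' h1 h2 h3 h4)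
        r a b [] none [((TA m s).root, (TB m s).root)]
        hb hab hba (by simp; omega)
        (fun q hq => absurd hq (by simp))
        (fun q hq => absurd hq (by simp))
        (fun i₀ ts h => absurd h (by simp))
        (fun p hp => Or.inl (List.mem_singleton.mp hp))
/-- For every positive integer `s`, `KEIN_s` is not expressible by
any first-order sentence on rooted, locally finite trees of alternating
quantifier depth at most `s - 1`. -/
theorem kein_not_expressible_low_aqd (s : ℕ) (hs : 0 < s) :
    ¬ ∃ B : FOFormula, B.IsSentence ∧ B.aqd ≤ s - 1 ∧
        ∀ T : RTree, T.IsTree → (Models T B ↔ Models T (KEIN s)) := by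
  rintro ⟨B, _, haqd, hagree⟩
  set m := max B.qd 1 with hm
  have hm1 : 1 ≤ m := le_max_right _ _
  have hqd : B.qd ≤ m := le_max_left _ _
  set T₁ := (TreePair m s).1 with hT₁
  set T₂ := (TreePair m s).2 with hT₂
  have htree1 : T₁.IsTree := (treePair_isTree m s).1
  have htree2 : T₂.IsTree := (treePair_isTree m s).2
  have hK1 : Models T₁ (KEIN s) := (models_KEIN T₁ s).mpr (treePair_models m hm1 s).1
  have hK2 : ¬ Models T₂ (KEIN s) := fun h => (treePair_models m hm1 s).2 ((models_KEIN T₂ s).mp h)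
  have hB1 : Models T₁ B := (hagree T₁ htree1).mpr hK1
  have hB2 : ¬ Models T₂ B := fun h => hK2 ((hagree T₂ htree2).mp h)
  have hD : DWin T₁ T₂ B.qd s s [(T₁.root, T₂.root)] :=
    dwin_treePair m s B.qd s s hqd le_rfl (by omega) (by omega)
  have htr := transfer T₁ T₂ B B.qd s s none [(T₁.root, T₂.root)]
    (fun _ => T₁.root) (fun _ => T₂.root)
    (fun i => List.mem_singleton.mpr rfl) (List.mem_singleton.mpr rfl)
    le_rfl (by omega) (by omega) hD true
    (by simp only [qbound, min_self]; have : B.aqdAux true none = B.aqd := rfl; omega)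
  exact hB2 (htr.1 rfl hB1)
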